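/- Let R = ⊕_{n≥0} R_n be an ℕ-graded ring equipped with a decreasing filtration R = F^0 ⊇ F^1 ⊇ F^2 ⊇ ⋯ by homogeneous two-sided ideals satisfying F^i · F^j ⊆ F^{i+j} for all i, j, and such that the filtration is finite in each degree: F^q ∩ R_n = 0 whenever q > n. If the associated graded ring gr R = ⊕_{q≥0} F^q / F^{q+1} is (left) Noetherian, then R is (left) Noetherian. -/

import Mathlib

/-!
STATEMENT 10: Let `R = ⊕_{n≥0} R_n` be an ℕ-graded ring with a decreasing
multiplicative filtration `R = F^0 ⊇ F^1 ⊇ ⋯` by homogeneous two-sided ideals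
(`F^i F^j ⊆ F^{i+j}`), finite in each degree (`F^q ∩ R_n = 0` for `q > n`).
If the associated graded ring `gr R = ⊕_{q≥0} F^q/F^{q+1}` is left Noetherian,
then `R` is left Noetherian.

`gr R` is encoded by an arbitrary ring `G` realizing it: additive maps
`σ q : F^q →+ G` (the "reduction mod `F^{q+1}`" maps) whose kernels are exactly
`F^{q+1}`, which are multiplicative (`σ (i+j) (x*y) = σ i x * σ j y`), send `1` to `1`,
and whose ranges give an internal direct sum decomposition of `G`.

Note that a family of additive subgroups `F` with `F 0 = ⊤` and
`x ∈ F i → y ∈ F j → x * y ∈ F (i+j)` is exactly a multiplicative filtration by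
two-sided ideals.
-/

open DirectSum

section Aux0

variable {R : Type*} [Ring R] (𝒜 : ℕ → AddSubgroup R) [GradedRing 𝒜]

lemma aux_exists_bound (x : R) :
    ∃ N : ℕ, ∀ m, N ≤ m → (DirectSum.decompose 𝒜 x m : R) = 0 := by
  classical
  refine ⟨((DirectSum.decompose 𝒜 x).support.sup id) + 1, fun m hm => ?_⟩
  have hnot : m ∉ (DirectSum.decompose 𝒜 x).support := by
    intro hmem
    have := Finset.le_sup (f := id) hmem
    simp only [id] at this
    omega
  rw [DFinsupp.notMem_support_iff.mp hnot]
  rfl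

lemma aux_eq_zero (x : R) (h : ∀ n, (DirectSum.decompose 𝒜 x n : R) = 0) : x = 0 := by
  classical
  rw [← DirectSum.sum_support_decompose 𝒜 x]
  exact Finset.sum_eq_zero fun n _ => h n

end Aux0

section Aux

variable {R : Type*} [Ring R]
variable (F : ℕ → AddSubgroup R)
variable {G : Type*} [Ring G]

/-- The image subgroup `σ q (K ∩ F q)`. -/
def auxB (σ : ∀ q : ℕ, F q →+ G) (K : Submodule R R) (q : ℕ) : AddSubgroup G :=
  AddSubgroup.map (σ q) (AddSubgroup.comap (F q).subtype K.toAddSubgroup)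

lemma auxB_mem {σ : ∀ q : ℕ, F q →+ G} {K : Submodule R R} {q : ℕ} {g : G} :
    g ∈ auxB F σ K q ↔ ∃ y : F q, (y : R) ∈ K ∧ σ q y = g := by
  simp only [auxB, AddSubgroup.mem_map, AddSubgroup.mem_comap]
  constructor
  · rintro ⟨y, hy, rfl⟩; exact ⟨y, hy, rfl⟩
  · rintro ⟨y, hy, rfl⟩; exact ⟨y, hy, rfl⟩

lemma auxB_le_range {σ : ∀ q : ℕ, F q →+ G} {K : Submodule R R} {q : ℕ} :
    auxB F σ K q ≤ (σ q).range := by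
  rintro g hg
  obtain ⟨y, _, rfl⟩ := (auxB_mem F).mp hg
  exact ⟨y, rfl⟩

set_option synthInstance.maxHeartbeats 1000000 in
set_option maxHeartbeats 1000000 in
lemma aux_mem_iSup_range (σ : ∀ q : ℕ, F q →+ G)
    (hinternal : DirectSum.IsInternal (fun q : ℕ => (σ q).range)) (a : G) :
    a ∈ ⨆ i, (σ i).range := by
  obtain ⟨f, rfl⟩ := hinternal.2 a
  induction f using DirectSum.induction_on with
  | zero => rw [map_zero]; exact zero_mem _
  | of i x =>
      rw [DirectSum.coeAddMonoidHom_of]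
      exact AddSubgroup.mem_iSup_of_mem i x.2
  | add f g hf hg => rw [map_add]; exact add_mem hf hg

/-- Extraction: if `σ q x` lies in the `G`-span of `⋃ p, σ p (K ∩ F p)`,
then it is already of the form `σ q y` with `y ∈ K ∩ F q`. -/
lemma aux_extract
    (hFmul : ∀ i j : ℕ, ∀ x y : R, x ∈ F i → y ∈ F j → x * y ∈ F (i + j))
    (σ : ∀ q : ℕ, F q →+ G)
    (hmul : ∀ (i j : ℕ) (x : F i) (y : F j),
        σ (i + j) ⟨(x : R) * (y : R), hFmul i j x y x.2 y.2⟩ = σ i x * σ j y)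
    (hinternal : DirectSum.IsInternal (fun q : ℕ => (σ q).range))
    (K : Submodule R R) (q : ℕ) (x : F q)
    (hx : σ q x ∈ Submodule.span G
      {g : G | ∃ (p : ℕ) (y : F p), (y : R) ∈ K ∧ σ p y = g}) :
    ∃ y : F q, (y : R) ∈ K ∧ σ q y = σ q x := by
  classical
  set C : AddSubgroup G := ⨆ p, auxB F σ K p with hC
  -- C is closed under left multiplication by G
  have hmulC : ∀ a : G, ∀ c ∈ C, a * c ∈ C := by
    intro a c hc
    refine AddSubgroup.iSup_induction (C := fun a => a * c ∈ C) _
      (aux_mem_iSup_range F σ hinternal a) ?_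
      (by show (0:G) * c ∈ C; rw [zero_mul]; exact zero_mem _)
      (fun u v hu hv => by show (u + v) * c ∈ C; rw [add_mul]; exact add_mem hu hv)
    rintro i g ⟨r, rfl⟩
    refine AddSubgroup.iSup_induction (C := fun c => σ i r * c ∈ C) _ hc ?_
      (by show σ i r * 0 ∈ C; rw [mul_zero]; exact zero_mem _)
      (fun u v hu hv => by show σ i r * (u + v) ∈ C; rw [mul_add]; exact add_mem hu hv)
    intro p g hg
    obtain ⟨y, hyK, rfl⟩ := (auxB_mem F).mp hg
    rw [← hmul i p r y]
    refine AddSubgroup.mem_iSup_of_mem (i + p) ((auxB_mem F).mpr ⟨_, ?_, rfl⟩)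
    exact K.smul_mem (r : R) hyK
  -- span is contained in C
  have hspan : σ q x ∈ C := by
    refine Submodule.span_induction ?_ (zero_mem _)
      (fun u v _ _ hu hv => add_mem hu hv) (fun a u _ hu => hmulC a u hu) hx
    rintro g ⟨p, y, hyK, rfl⟩
    exact AddSubgroup.mem_iSup_of_mem p ((auxB_mem F).mpr ⟨y, hyK, rfl⟩)
  -- decompose membership in the iSup as a finite sum
  have hdecomp : ∀ g ∈ C, ∃ (s : Finset ℕ) (c : ℕ → G),
      (∀ p, c p ∈ auxB F σ K p) ∧ (∀ p, p ∉ s → c p = 0) ∧ g = ∑ p ∈ s, c p := by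
    intro g hg
    refine AddSubgroup.iSup_induction (C := fun g => ∃ (s : Finset ℕ) (c : ℕ → G),
      (∀ p, c p ∈ auxB F σ K p) ∧ (∀ p, p ∉ s → c p = 0) ∧ g = ∑ p ∈ s, c p) _ hg ?_ ?_ ?_
    · intro p g hg
      refine ⟨{p}, fun r => if r = p then g else 0, fun r => ?_, fun r hr => ?_, ?_⟩
      · by_cases h : r = p
        · subst h; simpa using hg
        · simp only [if_neg h]; exact zero_mem _
      · simp only [Finset.mem_singleton] at hr; simp [hr]
      · simp
    · exact ⟨∅, 0, fun p => zero_mem _, fun p _ => rfl, by simp⟩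
    · rintro u v ⟨s₁, c₁, hc₁, hz₁, rfl⟩ ⟨s₂, c₂, hc₂, hz₂, rfl⟩
      refine ⟨s₁ ∪ s₂, c₁ + c₂, fun p => add_mem (hc₁ p) (hc₂ p),
        fun p hp => ?_, ?_⟩
      · simp only [Finset.mem_union, not_or] at hp
        simp [hz₁ p hp.1, hz₂ p hp.2]
      · simp only [Pi.add_apply]
        rw [Finset.sum_add_distrib]
        congr 1
        · exact Finset.sum_subset Finset.subset_union_left
            (fun p _ hp => hz₁ p hp)
        · exact Finset.sum_subset Finset.subset_union_right
            (fun p _ hp => hz₂ p hp)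
  obtain ⟨s, c, hc, hz, hsum⟩ := hdecomp _ hspan
  -- uniqueness via the internal direct sum
  have key : σ q x = if q ∈ s then c q else 0 := by
    set f1 : ⨁ p, ((σ p).range : AddSubgroup G) :=
      ∑ p ∈ s, DirectSum.of (fun p => ((σ p).range : AddSubgroup G)) p
        ⟨c p, auxB_le_range F (hc p)⟩ with hf1
    set f2 : ⨁ p, ((σ p).range : AddSubgroup G) :=
      DirectSum.of (fun p => ((σ p).range : AddSubgroup G)) q ⟨σ q x, ⟨x, rfl⟩⟩ with hf2
    have hcoe : DirectSum.coeAddMonoidHom _ f1 = DirectSum.coeAddMonoidHom _ f2 := by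
      rw [hf1, hf2, map_sum, DirectSum.coeAddMonoidHom_of]
      simp only [DirectSum.coeAddMonoidHom_of]
      exact hsum.symm
    have hf12 : f1 = f2 := hinternal.1 hcoe
    have heval := congrArg
      (fun f : ⨁ p, ((σ p).range : AddSubgroup G) => ((f q : _) : G)) hf12
    simp only [hf1, hf2] at heval
    rw [DirectSum.of_eq_same] at heval
    rw [DFinsupp.finset_sum_apply, AddSubmonoidClass.coe_finset_sum] at heval
    have h3 : ∀ p ∈ s,
        (((DirectSum.of (fun p => ((σ p).range : AddSubgroup G)) p
          ⟨c p, auxB_le_range F (hc p)⟩) q : ((σ q).range : AddSubgroup G)) : G)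
          = if p = q then c p else 0 := by
      intro p _
      by_cases h : p = q
      · subst h; rw [DirectSum.of_eq_same, if_pos rfl]
      · rw [DirectSum.of_eq_of_ne _ _ _ (Ne.symm h), if_neg h, ZeroMemClass.coe_zero]
    rw [Finset.sum_congr rfl h3, Finset.sum_ite_eq' s q] at heval
    exact heval.symm
  by_cases hqs : q ∈ s
  · rw [if_pos hqs] at key
    obtain ⟨y, hyK, hy⟩ := (auxB_mem F).mp (hc q)
    exact ⟨y, hyK, by rw [hy, key]⟩
  · rw [if_neg hqs] at key
    exact ⟨0, K.zero_mem, by rw [map_zero, key]⟩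

set_option maxHeartbeats 1600000 in
set_option synthInstance.maxHeartbeats 1000000 in
/-- Graded injectivity: for homogeneous left ideals `K ≤ K'` whose `G`-spans agree,
`K' ≤ K`. -/
lemma aux_graded_inj {𝒜 : ℕ → AddSubgroup R} [GradedRing 𝒜]
    (hF0 : F 0 = ⊤)
    (hFmul : ∀ i j : ℕ, ∀ x y : R, x ∈ F i → y ∈ F j → x * y ∈ F (i + j))
    (hFhom : ∀ q n : ℕ, ∀ x ∈ F q, (DirectSum.decompose 𝒜 x n : R) ∈ F q)
    (hFfin : ∀ q n : ℕ, n < q → ∀ x ∈ F q, x ∈ 𝒜 n → x = 0)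
    (σ : ∀ q : ℕ, F q →+ G)
    (hker : ∀ (q : ℕ) (x : F q), σ q x = 0 ↔ (x : R) ∈ F (q + 1))
    (hmul : ∀ (i j : ℕ) (x : F i) (y : F j),
        σ (i + j) ⟨(x : R) * (y : R), hFmul i j x y x.2 y.2⟩ = σ i x * σ j y)
    (hinternal : DirectSum.IsInternal (fun q : ℕ => (σ q).range))
    (K K' : Submodule R R)
    (hKhom : ∀ (n : ℕ) (r : R), r ∈ K → (DirectSum.decompose 𝒜 r n : R) ∈ K)
    (hK'hom : ∀ (n : ℕ) (r : R), r ∈ K' → (DirectSum.decompose 𝒜 r n : R) ∈ K')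
    (hKK' : K ≤ K')
    (hJ : Submodule.span G {g : G | ∃ (p : ℕ) (y : F p), (y : R) ∈ K' ∧ σ p y = g} ≤
          Submodule.span G {g : G | ∃ (p : ℕ) (y : F p), (y : R) ∈ K ∧ σ p y = g}) :
    K' ≤ K := by
  have claim : ∀ k : ℕ, ∀ q n : ℕ, ∀ x : R, x ∈ 𝒜 n → x ∈ K' → x ∈ F q →
      n + 1 ≤ q + k → x ∈ K := by
    intro k
    induction k with
    | zero =>
      intro q n x hxA _ hxF hle
      rw [hFfin q n (by omega) x hxF hxA]
      exact K.zero_mem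
    | succ k ih =>
      intro q n x hxA hxK' hxF hle
      have h1 : σ q ⟨x, hxF⟩ ∈ Submodule.span G
          {g : G | ∃ (p : ℕ) (y : F p), (y : R) ∈ K' ∧ σ p y = g} :=
        Submodule.subset_span ⟨q, ⟨x, hxF⟩, hxK', rfl⟩
      obtain ⟨y, hyK, hyσ⟩ := aux_extract F hFmul σ hmul hinternal K q ⟨x, hxF⟩ (hJ h1)
      have hsub : x - (y : R) ∈ F (q + 1) := by
        have h0 : σ q (⟨x, hxF⟩ - y) = 0 := by rw [map_sub, hyσ, sub_self]
        exact (hker q _).mp h0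
      have hz1 : (DirectSum.decompose 𝒜 (x - (y : R)) n : R) ∈ F (q + 1) :=
        hFhom _ _ _ hsub
      have hzK' : (DirectSum.decompose 𝒜 (x - (y : R)) n : R) ∈ K' :=
        hK'hom n _ (K'.sub_mem hxK' (hKK' hyK))
      have hz := ih (q + 1) n _ (SetLike.coe_mem _) hzK' hz1 (by omega)
      have hyn : (DirectSum.decompose 𝒜 ((y : R)) n : R) ∈ K := hKhom n _ hyK
      have hxeq : x = (DirectSum.decompose 𝒜 (x - (y : R)) n : R) +
          (DirectSum.decompose 𝒜 ((y : R)) n : R) := by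
        rw [DirectSum.decompose_sub, DirectSum.sub_apply, AddSubgroupClass.coe_sub,
          DirectSum.decompose_of_mem_same 𝒜 hxA]
        abel
      rw [hxeq]
      exact K.add_mem hz hyn
  intro x hx
  classical
  rw [← DirectSum.sum_support_decompose 𝒜 x]
  refine Submodule.sum_mem K fun n _ => ?_
  exact claim (n + 1) 0 n _ (SetLike.coe_mem _) (hK'hom n x hx)
    (by rw [hF0]; trivial) (by omega)

end Aux

section Lead

variable {R : Type*} [Ring R] (𝒜 : ℕ → AddSubgroup R) [GradedRing 𝒜]

/-- The set of leading homogeneous components of elements of `I`. -/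
def auxLset (I : Submodule R R) : Set R :=
  {r | ∃ x ∈ I, ∃ M : ℕ, (∀ m, M < m → (DirectSum.decompose 𝒜 x m : R) = 0) ∧
    r = (DirectSum.decompose 𝒜 x M : R)}

lemma auxL_homog (I : Submodule R R) :
    ∀ (n : ℕ) (r : R), r ∈ Submodule.span R (auxLset 𝒜 I) →
      (DirectSum.decompose 𝒜 r n : R) ∈ Submodule.span R (auxLset 𝒜 I) := by
  have h : (Ideal.span (auxLset 𝒜 I)).IsHomogeneous 𝒜 := by
    refine Ideal.homogeneous_span 𝒜 _ ?_
    rintro r ⟨x, hx, M, htop, rfl⟩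
    exact ⟨M, SetLike.coe_mem _⟩
  exact fun n r hr => h n hr

set_option maxHeartbeats 1600000 in
/-- Any homogeneous piece of an element of the span of leading terms lifts to an
element of `I` with no higher components. -/
lemma aux_lead_lift (I : Submodule R R) {t : R}
    (ht : t ∈ Submodule.span R (auxLset 𝒜 I)) (N : ℕ) :
    ∃ u ∈ I, (DirectSum.decompose 𝒜 u N : R) = (DirectSum.decompose 𝒜 t N : R) ∧
      ∀ m, N < m → (DirectSum.decompose 𝒜 u m : R) = 0 := by
  classical
  set p : R → Prop := fun t => ∀ N : ℕ, ∃ u ∈ I,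
    (DirectSum.decompose 𝒜 u N : R) = (DirectSum.decompose 𝒜 t N : R) ∧
      ∀ m, N < m → (DirectSum.decompose 𝒜 u m : R) = 0 with hp
  have pzero : p 0 := fun N => ⟨0, I.zero_mem, rfl, fun m _ => by simp⟩
  have padd : ∀ u v, p u → p v → p (u + v) := by
    intro u v hu hv N
    obtain ⟨a, haI, haN, hatop⟩ := hu N
    obtain ⟨b, hbI, hbN, hbtop⟩ := hv N
    refine ⟨a + b, I.add_mem haI hbI, ?_, ?_⟩
    · rw [DirectSum.decompose_add, DirectSum.decompose_add, DirectSum.add_apply,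
        DirectSum.add_apply, AddMemClass.coe_add, AddMemClass.coe_add,
        haN, hbN]
    · intro m hm
      rw [DirectSum.decompose_add, DirectSum.add_apply, AddMemClass.coe_add,
        hatop m hm, hbtop m hm, add_zero]
  have phom : ∀ (d : ℕ) (r : R), r ∈ 𝒜 d → ∀ t, p t → p (r * t) := by
    intro d r hr t hpt N
    by_cases hd : d ≤ N
    · obtain ⟨u, huI, huN, hutop⟩ := hpt (N - d)
      refine ⟨r * u, by simpa using I.smul_mem r huI, ?_, ?_⟩
      · rw [DirectSum.coe_decompose_mul_of_left_mem_of_le (𝒜 := 𝒜) hr hd,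
          DirectSum.coe_decompose_mul_of_left_mem_of_le (𝒜 := 𝒜) hr hd, huN]
      · intro m hm
        have hdm : d ≤ m := le_trans hd (le_of_lt hm)
        rw [DirectSum.coe_decompose_mul_of_left_mem_of_le (𝒜 := 𝒜) hr hdm,
          hutop (m - d) (by omega), mul_zero]
    · refine ⟨0, I.zero_mem, ?_, fun m _ => by simp⟩
      rw [DirectSum.coe_decompose_mul_of_left_mem_of_not_le (𝒜 := 𝒜) hr hd]
      simp
  have psmul : ∀ (a t : R), p t → p (a * t) := by
    intro a t hpt
    have hs : ∀ s : Finset ℕ, p (∑ d ∈ s, (DirectSum.decompose 𝒜 a d : R) * t) := by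
      intro s
      induction s using Finset.induction_on with
      | empty => simpa using pzero
      | insert _ _ hnot ih =>
          rw [Finset.sum_insert hnot]
          exact padd _ _ (phom _ _ (SetLike.coe_mem _) t hpt) ih
    have ha : a * t = ∑ d ∈ (DirectSum.decompose 𝒜 a).support,
        (DirectSum.decompose 𝒜 a d : R) * t := by
      rw [← Finset.sum_mul, DirectSum.sum_support_decompose]
    rw [ha]
    exact hs _
  have hmain : p t := by
    refine Submodule.span_induction ?_ pzero (fun u v _ _ => padd u v)
      (fun a u _ hu => by rw [smul_eq_mul]; exact psmul a u hu) ht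
    rintro r ⟨x, hxI, M, htop, rfl⟩ N
    by_cases hNM : N = M
    · subst hNM
      exact ⟨x, hxI, by
        rw [DirectSum.decompose_of_mem_same 𝒜
          (SetLike.coe_mem (DirectSum.decompose 𝒜 x N))], htop⟩
    · refine ⟨0, I.zero_mem, ?_, fun m _ => by simp⟩
      rw [DirectSum.decompose_of_mem_ne 𝒜
        (SetLike.coe_mem (DirectSum.decompose 𝒜 x M)) (Ne.symm hNM)]
      simp
  exact hmain N

set_option maxHeartbeats 1600000 in
/-- Hilbert-basis style argument: ideals with the same span of leading terms agree. -/
lemma aux_hilbert (I I' : Submodule R R) (hII' : I ≤ I')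
    (hL : Submodule.span R (auxLset 𝒜 I') ≤ Submodule.span R (auxLset 𝒜 I)) :
    I' ≤ I := by
  classical
  have claim : ∀ N : ℕ, ∀ x ∈ I',
      (∀ m, N ≤ m → (DirectSum.decompose 𝒜 x m : R) = 0) → x ∈ I := by
    intro N
    induction N with
    | zero =>
      intro x hx h
      rw [aux_eq_zero 𝒜 x (fun n => h n (Nat.zero_le n))]
      exact I.zero_mem
    | succ N ih =>
      intro x hx h
      have ht : (DirectSum.decompose 𝒜 x N : R) ∈ Submodule.span R (auxLset 𝒜 I') :=
        Submodule.subset_span ⟨x, hx, N, (fun m hm => h m hm), rfl⟩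
      obtain ⟨u, huI, huN, hutop⟩ := aux_lead_lift 𝒜 I (hL ht) N
      have huN' : (DirectSum.decompose 𝒜 u N : R) = (DirectSum.decompose 𝒜 x N : R) := by
        rw [huN, DirectSum.decompose_of_mem_same 𝒜
          (SetLike.coe_mem (DirectSum.decompose 𝒜 x N))]
      have hxu : x - u ∈ I := by
        refine ih (x - u) (I'.sub_mem hx (hII' huI)) ?_
        intro m hm
        rw [DirectSum.decompose_sub, DirectSum.sub_apply, AddSubgroupClass.coe_sub]
        rcases Nat.lt_or_ge m (N + 1) with hlt | hge
        · have hmN : m = N := by omega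
          subst hmN
          rw [huN', sub_self]
        · rw [h m hge, hutop m (by omega), sub_self]
      have hfin := I.add_mem hxu huI
      rwa [sub_add_cancel] at hfin
  intro x hx
  obtain ⟨N, hN⟩ := aux_exists_bound 𝒜 x
  exact claim N x hx hN

end Lead


theorem isNoetherianRing_of_associatedGraded
    {R : Type*} [Ring R] (𝒜 : ℕ → AddSubgroup R) [GradedRing 𝒜]
    (F : ℕ → AddSubgroup R)
    (hF0 : F 0 = ⊤)
    (hFdec : ∀ i : ℕ, F (i + 1) ≤ F i)
    (hFmul : ∀ i j : ℕ, ∀ x y : R, x ∈ F i → y ∈ F j → x * y ∈ F (i + j))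
    (hFhom : ∀ q n : ℕ, ∀ x ∈ F q, (DirectSum.decompose 𝒜 x n : R) ∈ F q)
    (hFfin : ∀ q n : ℕ, n < q → ∀ x ∈ F q, x ∈ 𝒜 n → x = 0)
    (G : Type*) [Ring G]
    (σ : ∀ q : ℕ, F q →+ G)
    (hker : ∀ (q : ℕ) (x : F q), σ q x = 0 ↔ (x : R) ∈ F (q + 1))
    (hmul : ∀ (i j : ℕ) (x : F i) (y : F j),
        σ (i + j) ⟨(x : R) * (y : R), hFmul i j x y x.2 y.2⟩ = σ i x * σ j y)
    (hone : σ 0 ⟨1, by simp [hF0]⟩ = 1)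
    (hinternal : DirectSum.IsInternal (fun q : ℕ => (σ q).range))
    (hG : IsNoetherianRing G) :
    IsNoetherianRing R := by
  classical
  set Lf : Submodule R R → Submodule R R := fun I => Submodule.span R (auxLset 𝒜 I) with hLf
  set Jf : Submodule R R → Submodule G G := fun K =>
    Submodule.span G {g : G | ∃ (p : ℕ) (y : F p), (y : R) ∈ K ∧ σ p y = g} with hJf
  have hLmono : ∀ {I I' : Submodule R R}, I ≤ I' → Lf I ≤ Lf I' := by
    intro I I' h
    apply Submodule.span_mono
    rintro r ⟨x, hx, M, htop, rfl⟩
    exact ⟨x, h hx, M, htop, rfl⟩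
  have hJmono : ∀ {K K' : Submodule R R}, K ≤ K' → Jf K ≤ Jf K' := by
    intro K K' h
    apply Submodule.span_mono
    rintro g ⟨p, y, hy, rfl⟩
    exact ⟨p, y, h hy, rfl⟩
  have hstrict : ∀ {I I' : Submodule R R}, I < I' → Jf (Lf I) < Jf (Lf I') := by
    intro I I' h
    refine lt_of_le_of_ne (hJmono (hLmono h.le)) (fun heq => ?_)
    have h1 : Lf I' ≤ Lf I :=
      aux_graded_inj F hF0 hFmul hFhom hFfin σ hker hmul hinternal (Lf I) (Lf I')
        (fun n r hr => auxL_homog 𝒜 I n r hr) (fun n r hr => auxL_homog 𝒜 I' n r hr)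
        (hLmono h.le) (le_of_eq heq.symm)
    have h2 : I' ≤ I := aux_hilbert 𝒜 I I' h.le h1
    exact absurd h2 (not_le_of_gt h)
  rw [isNoetherianRing_iff, isNoetherian_iff]
  have hwfG : WellFounded ((· > ·) : Submodule G G → Submodule G G → Prop) :=
    isNoetherian_iff.mp (isNoetherianRing_iff.mp hG)
  exact Subrelation.wf (fun {I I'} (h : I' < I) => hstrict h)
    (InvImage.wf (fun I => Jf (Lf I)) hwfG)
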